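/- A cone σ ⊆ ℝⁿ of the form Cone(S) for finite S is strongly convex (i.e., σ ∩ (−σ) = {0}) if and only if its dual cone σ^∨ ⊆ (ℝⁿ)* is full-dimensional (spans (ℝⁿ)* as a vector space). -/

import Mathlib

open scoped BigOperators

/-- The polyhedral cone generated by a finite set `T ⊆ ℝⁿ`. -/
def coneOf (n : ℕ) (T : Finset (Fin n → ℝ)) : Set (Fin n → ℝ) :=
  {x | ∃ lam : (Fin n → ℝ) → ℝ, (∀ u, 0 ≤ lam u) ∧ x = ∑ u ∈ T, lam u • u}

lemma coneOf_zero_mem (n : ℕ) (T : Finset (Fin n → ℝ)) : (0 : Fin n → ℝ) ∈ coneOf n T :=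
  ⟨0, fun _ => le_rfl, by simp⟩

/-- A polyhedral cone `σ = Cone(T) ⊆ ℝⁿ` is strongly convex (`σ ∩ (−σ) = {0}`) if and only
if its dual cone `σ^∨ ⊆ (ℝⁿ)*` is full-dimensional, i.e. spans `(ℝⁿ)*`. -/
theorem strongly_convex_iff_dual_full_dimensional (n : ℕ) (T : Finset (Fin n → ℝ)) :
    coneOf n T ∩ (-(coneOf n T)) = {0} ↔
      Submodule.span ℝ
        {φ : Module.Dual ℝ (Fin n → ℝ) | ∀ u ∈ coneOf n T, 0 ≤ φ u} = ⊤ := by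
  constructor
  · intro h
    -- Step 1 : `0` is not in the convex hull of `T \ {0}`.
    have h0 : (0 : Fin n → ℝ) ∉ convexHull ℝ (↑(T.erase 0) : Set (Fin n → ℝ)) := by
      intro h0
      rw [Finset.convexHull_eq] at h0
      obtain ⟨w, hw0, hw1, hwc⟩ := h0
      have hy : ∃ y ∈ T.erase 0, 0 < w y := by
        by_contra hc
        push_neg at hc
        have : ∑ y ∈ T.erase 0, w y ≤ 0 := Finset.sum_nonpos hc
        linarith
      obtain ⟨y₀, hy₀T, hy₀pos⟩ := hy
      have hy₀T'' : y₀ ∈ T := Finset.mem_of_mem_erase hy₀T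
      have hy₀ne : y₀ ≠ 0 := Finset.ne_of_mem_erase hy₀T
      have hsum : ∑ y ∈ T.erase 0, w y • y = (0 : Fin n → ℝ) := by
        rw [Finset.centerMass, hw1] at hwc
        simpa using hwc
      have hsplit : w y₀ • y₀ + ∑ y ∈ (T.erase 0).erase y₀, w y • y = (0 : Fin n → ℝ) :=
        (Finset.add_sum_erase (T.erase 0) (fun y => w y • y) hy₀T).trans hsum
      have hx1 : w y₀ • y₀ ∈ coneOf n T := by
        refine ⟨fun u => if u = y₀ then w y₀ else 0, fun u => ?_, ?_⟩
        · dsimp only; split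
          · exact le_of_lt hy₀pos
          · exact le_rfl
        · rw [Finset.sum_eq_single y₀]
          · simp
          · intro b _ hb; simp [hb]
          · intro hb; exact absurd hy₀T'' hb
      have hx2 : w y₀ • y₀ ∈ -(coneOf n T) := by
        rw [Set.mem_neg]
        refine ⟨fun u => if u ∈ (T.erase 0).erase y₀ then w u else 0, fun u => ?_, ?_⟩
        · dsimp only; split
          · next hu => exact hw0 u (Finset.mem_of_mem_erase hu)
          · exact le_rfl
        · have hsub : (T.erase 0).erase y₀ ⊆ T := fun u hu =>
            Finset.mem_of_mem_erase (Finset.mem_of_mem_erase hu)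
          have hrw : ∑ u ∈ T, (fun u => if u ∈ (T.erase 0).erase y₀ then w u else 0) u • u
              = ∑ u ∈ (T.erase 0).erase y₀, w u • u := by
            rw [← Finset.sum_subset hsub (fun u _ hu => by simp [hu])]
            exact Finset.sum_congr rfl fun u hu => by simp [hu]
          rw [hrw, neg_eq_iff_add_eq_zero]
          exact hsplit
      have hz : w y₀ • y₀ = (0 : Fin n → ℝ) := by
        have := h.subset (Set.mem_inter hx1 hx2)
        simpa using this
      rcases smul_eq_zero.mp hz with h' | h'
      · exact absurd h' (ne_of_gt hy₀pos)
      · exact hy₀ne h'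
    -- Step 2 : separate `0` from the hull to get a strictly positive functional.
    obtain ⟨f, c, hfc, hfb⟩ :=
      geometric_hahn_banach_point_closed
        (convex_convexHull ℝ _)
        (((T.erase 0).finite_toSet).isCompact_convexHull (𝕜 := ℝ)).isClosed h0
    have hc0 : (0 : ℝ) < c := by simpa using hfc
    have hfpos : ∀ u ∈ T, u ≠ 0 → 0 < f u := by
      intro u huT hune
      have : u ∈ convexHull ℝ (↑(T.erase 0) : Set (Fin n → ℝ)) :=
        subset_convexHull ℝ _ (by simp [hune, huT])
      linarith [hfb u this]
    set φ : Module.Dual ℝ (Fin n → ℝ) := (f : (Fin n → ℝ) →L[ℝ] ℝ).toLinearMap with hφ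
    have hφS : ∀ x ∈ coneOf n T, 0 ≤ φ x := by
      intro x hx
      obtain ⟨lam, hlam, rfl⟩ := hx
      rw [map_sum]
      refine Finset.sum_nonneg fun u huT => ?_
      rw [map_smul]
      by_cases hu : u = 0
      · simp [hu]
      · exact smul_nonneg (hlam u) (le_of_lt (hfpos u huT hu))
    -- Step 3 : every functional is a difference of elements of the dual cone.
    rw [eq_top_iff]
    intro ψ _
    obtain ⟨t, ht⟩ := Finset.exists_le (T.image fun u => -ψ u / φ u)
    set t' : ℝ := max t 0 with ht'
    have hψφ : ∀ x ∈ coneOf n T, 0 ≤ (ψ + t' • φ) x := by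
      intro x hx
      obtain ⟨lam, hlam, rfl⟩ := hx
      rw [map_sum]
      refine Finset.sum_nonneg fun u huT => ?_
      rw [map_smul]
      by_cases hu : u = 0
      · simp [hu]
      · refine smul_nonneg (hlam u) ?_
        have hφu : 0 < φ u := hfpos u huT hu
        have h1 : -ψ u / φ u ≤ t' :=
          le_trans (ht _ (Finset.mem_image_of_mem _ huT)) (le_max_left _ _)
        have h2 : -ψ u ≤ t' * φ u := by
          rwa [div_le_iff₀ hφu] at h1
        simp only [LinearMap.add_apply, LinearMap.smul_apply, smul_eq_mul]
        linarith
    have hm1 : ψ + t' • φ ∈ Submodule.span ℝ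
        {φ : Module.Dual ℝ (Fin n → ℝ) | ∀ u ∈ coneOf n T, 0 ≤ φ u} :=
      Submodule.subset_span hψφ
    have hm2 : φ ∈ Submodule.span ℝ
        {φ : Module.Dual ℝ (Fin n → ℝ) | ∀ u ∈ coneOf n T, 0 ≤ φ u} :=
      Submodule.subset_span hφS
    have heq : ψ = (ψ + t' • φ) - t' • φ := (add_sub_cancel_right ψ (t' • φ)).symm
    rw [heq]
    exact Submodule.sub_mem _ hm1 (Submodule.smul_mem _ _ hm2)
  · intro h
    rw [Set.eq_singleton_iff_unique_mem]
    refine ⟨Set.mem_inter (coneOf_zero_mem n T) ?_, ?_⟩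
    · rw [Set.mem_neg, neg_zero]; exact coneOf_zero_mem n T
    · rintro x ⟨hx1, hx2⟩
      rw [Set.mem_neg] at hx2
      have hker : ∀ φ ∈ {φ : Module.Dual ℝ (Fin n → ℝ) | ∀ u ∈ coneOf n T, 0 ≤ φ u},
          φ x = 0 := by
        intro φ hφ
        have h1 : 0 ≤ φ x := hφ x hx1
        have h2 : 0 ≤ φ (-x) := hφ (-x) hx2
        rw [map_neg] at h2
        linarith
      have hle : Submodule.span ℝ {φ : Module.Dual ℝ (Fin n → ℝ) | ∀ u ∈ coneOf n T, 0 ≤ φ u}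
          ≤ LinearMap.ker (Module.Dual.eval ℝ (Fin n → ℝ) x) := by
        rw [Submodule.span_le]
        intro φ hφ
        exact hker φ hφ
      rw [h] at hle
      have hall : ∀ φ : Module.Dual ℝ (Fin n → ℝ), φ x = 0 := fun φ => hle Submodule.mem_top
      exact (Module.forall_dual_apply_eq_zero_iff ℝ x).mp hall
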